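/- arXiv:1709.04509 — 2 statements merged into one kernel-verified Lean document; each statement's English description precedes it below -/
import Mathlib

section
/- Transport equation for the inverse foliation density: assume in addition that u is C² and L¹, …, Lⁿ are C¹ on Ω. Then μ is C¹ on Ω and satisfies L μ = Σ_{a=1}^n (X̆ L^a) ξ_a + μ Σ_{a=1}^n (L L^a) ξ_a on Ω; equivalently, L μ = μ² Σ_{a=1}^n (∂_t L^a)(∂_a u). (Equation (3.17) of the lemma 'Transport equations for μ, ξ_j, and ξ_j^{(Small)}'.) -/
/-- Cartesian partial derivative `∂_α f` of a scalar function on `ℝ^m`. -/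
noncomputable def pd {m : ℕ} (f : (Fin m → ℝ) → ℝ) (α : Fin m) (p : Fin m → ℝ) : ℝ :=
  fderiv ℝ f p (Pi.single α 1)

/-- Transport equation for the inverse foliation density.  If `u` is `C²`
and the `L^a` are `C¹` on `Ω`, then `μ = 1/∂_t u` is `C¹` on `Ω` and satisfies
`L μ = Σ_a (X̆ L^a) ξ_a + μ Σ_a (L L^a) ξ_a`; equivalently
`L μ = μ² Σ_a (∂_t L^a)(∂_a u)`.  Here `L f = ∂_t f + Σ_b L^b ∂_b f`,
`X̆ f = μ Σ_b (−L^b) ∂_b f`, and `ξ_a = μ ∂_a u`. -/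
theorem mu_transport_equation {n : ℕ} (hn : 1 ≤ n)
    (Ω : Set (Fin (n + 1) → ℝ)) (hΩ : IsOpen Ω)
    (L : Fin n → (Fin (n + 1) → ℝ) → ℝ)
    (u : (Fin (n + 1) → ℝ) → ℝ)
    (hu : ContDiffOn ℝ 2 u Ω)
    (hL : ∀ a : Fin n, ContDiffOn ℝ 1 (L a) Ω)
    (heik : ∀ p ∈ Ω, pd u 0 p + ∑ a : Fin n, L a p * pd u a.succ p = 0)
    (hpos : ∀ p ∈ Ω, 0 < pd u 0 p) :
    ContDiffOn ℝ 1 (fun p => 1 / pd u 0 p) Ω ∧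
    ∀ p ∈ Ω,
      (pd (fun q => 1 / pd u 0 q) 0 p
            + ∑ b : Fin n, L b p * pd (fun q => 1 / pd u 0 q) b.succ p
          = (∑ a : Fin n,
              ((1 / pd u 0 p) * ∑ b : Fin n, (-L b p) * pd (L a) b.succ p)
                * ((1 / pd u 0 p) * pd u a.succ p))
            + (1 / pd u 0 p)
              * ∑ a : Fin n,
                  (pd (L a) 0 p + ∑ b : Fin n, L b p * pd (L a) b.succ p)
                    * ((1 / pd u 0 p) * pd u a.succ p)) ∧
      (pd (fun q => 1 / pd u 0 q) 0 p
            + ∑ b : Fin n, L b p * pd (fun q => 1 / pd u 0 q) b.succ p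
          = (1 / pd u 0 p) ^ 2 * ∑ a : Fin n, pd (L a) 0 p * pd u a.succ p) := by
  classical
  have hu1 : ContDiffOn ℝ 1 (fun x => fderiv ℝ u x) Ω :=
    hu.fderiv_of_isOpen hΩ (by norm_num)
  have hpd0 : ∀ α : Fin (n + 1), ContDiffOn ℝ 1 (pd u α) Ω := by
    intro α
    have := (ContinuousLinearMap.apply ℝ ℝ (Pi.single α (1 : ℝ))).contDiff.comp_contDiffOn hu1
    exact this
  have hμC : ContDiffOn ℝ 1 (fun p => 1 / pd u 0 p) Ω := by
    have := (hpd0 0).inv (fun p hp => (hpos p hp).ne')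
    simp only [one_div]
    exact this
  refine ⟨hμC, ?_⟩
  intro p hp
  have hmem : Ω ∈ nhds p := hΩ.mem_nhds hp
  set e : Fin (n + 1) → (Fin (n + 1) → ℝ) := fun α => Pi.single α 1 with he
  have hF : HasFDerivAt (fun x => fderiv ℝ u x) (fderiv ℝ (fderiv ℝ u) p) p :=
    ((hu1.differentiableOn one_ne_zero).differentiableAt hmem).hasFDerivAt
  set D2 := fderiv ℝ (fderiv ℝ u) p with hD2
  set H : Fin (n + 1) → Fin (n + 1) → ℝ := fun α β => D2 (e β) (e α) with hH
  -- derivative of the partial derivatives of u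
  have hFα : ∀ α : Fin (n + 1),
      HasFDerivAt (fun q => pd u α q) ((ContinuousLinearMap.apply ℝ ℝ (e α)).comp D2) p :=
    fun α => ((ContinuousLinearMap.apply ℝ ℝ (e α)).hasFDerivAt).comp p hF
  have hLa : ∀ a : Fin n, HasFDerivAt (L a) (fderiv ℝ (L a) p) p := fun a =>
    (((hL a).differentiableOn one_ne_zero).differentiableAt hmem).hasFDerivAt
  -- differentiating the eikonal identity
  set g : (Fin (n + 1) → ℝ) → ℝ := fun q => pd u 0 q + ∑ a : Fin n, L a q * pd u a.succ q
    with hg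
  set Dg : (Fin (n + 1) → ℝ) →L[ℝ] ℝ :=
    (ContinuousLinearMap.apply ℝ ℝ (e 0)).comp D2
      + ∑ a : Fin n, (L a p • (ContinuousLinearMap.apply ℝ ℝ (e a.succ)).comp D2
          + pd u a.succ p • fderiv ℝ (L a) p) with hDgdef
  have hgD : HasFDerivAt g Dg p := by
    refine (hFα 0).add (HasFDerivAt.fun_sum ?_)
    intro a _
    exact (hLa a).mul (hFα a.succ)
  have hg0 : fderiv ℝ g p = 0 := by
    have hev : g =ᶠ[nhds p] fun _ => (0 : ℝ) := by
      filter_upwards [hmem] with q hq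
      exact heik q hq
    rw [hev.fderiv_eq]
    exact fderiv_const_apply 0
  have hDg0 : Dg = 0 := by rw [← hgD.fderiv, hg0]
  have hC : ∀ β : Fin (n + 1),
      H 0 β + ∑ a : Fin n, (L a p * H a.succ β + pd (L a) β p * pd u a.succ p) = 0 := by
    intro β
    have h := congrArg (fun T : (Fin (n + 1) → ℝ) →L[ℝ] ℝ => T (e β)) hDg0
    simpa [hDgdef, hH, pd, ContinuousLinearMap.sum_apply, smul_eq_mul, mul_comm] using h
  -- symmetry of second derivatives
  have hsym : ∀ α β, H α β = H β α := by
    intro α β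
    have h2 : IsSymmSndFDerivAt ℝ u p :=
      (hu.contDiffAt hmem).isSymmSndFDerivAt (by simp)
    exact h2 (e β) (e α)
  -- derivative of μ
  have hT : pd u 0 p ≠ 0 := (hpos p hp).ne'
  have hinv : HasFDerivAt (fun q => (pd u 0 q)⁻¹)
      ((-(pd u 0 p ^ 2)⁻¹ : ℝ) • ((ContinuousLinearMap.apply ℝ ℝ (e 0)).comp D2)) p :=
    (hasDerivAt_inv hT).comp_hasFDerivAt p (hFα 0)
  have hμpd : ∀ β : Fin (n + 1),
      pd (fun q => 1 / pd u 0 q) β p = -(pd u 0 p ^ 2)⁻¹ * H 0 β := by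
    intro β
    have h1 : (fun q => 1 / pd u 0 q) = fun q => (pd u 0 q)⁻¹ := by
      funext q; exact one_div _
    rw [h1]
    show fderiv ℝ (fun q => (pd u 0 q)⁻¹) p (Pi.single β 1) = _
    rw [hinv.fderiv]
    simp [hH, he, smul_eq_mul]
  -- key consequence of the differentiated identity at β = 0, using symmetry
  have hkey : H 0 0 + ∑ b : Fin n, L b p * H 0 b.succ
      = -∑ a : Fin n, pd (L a) 0 p * pd u a.succ p := by
    have h0 := hC 0
    have hswap : ∑ b : Fin n, L b p * H 0 b.succ = ∑ b : Fin n, L b p * H b.succ 0 :=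
      Finset.sum_congr rfl fun b _ => by rw [hsym 0 b.succ]
    rw [Finset.sum_add_distrib] at h0
    rw [hswap]
    linarith
  -- second (simplified) form of the transport equation
  have hG2 : pd (fun q => 1 / pd u 0 q) 0 p
        + ∑ b : Fin n, L b p * pd (fun q => 1 / pd u 0 q) b.succ p
      = (1 / pd u 0 p) ^ 2 * ∑ a : Fin n, pd (L a) 0 p * pd u a.succ p := by
    have hb : ∑ b : Fin n, L b p * pd (fun q => 1 / pd u 0 q) b.succ p
        = -(pd u 0 p ^ 2)⁻¹ * ∑ b : Fin n, L b p * H 0 b.succ := by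
      rw [Finset.mul_sum]
      exact Finset.sum_congr rfl fun b _ => by rw [hμpd]; ring
    rw [hμpd 0, hb]
    have : (1 / pd u 0 p) ^ 2 = (pd u 0 p ^ 2)⁻¹ := by
      rw [one_div, inv_pow]
    rw [this]
    linear_combination (-(pd u 0 p ^ 2)⁻¹) * hkey
  refine ⟨?_, hG2⟩
  -- first form follows from the second by pure algebra
  have halg : (∑ a : Fin n,
        ((1 / pd u 0 p) * ∑ b : Fin n, (-L b p) * pd (L a) b.succ p)
          * ((1 / pd u 0 p) * pd u a.succ p))
      + (1 / pd u 0 p)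
        * ∑ a : Fin n,
            (pd (L a) 0 p + ∑ b : Fin n, L b p * pd (L a) b.succ p)
              * ((1 / pd u 0 p) * pd u a.succ p)
      = (1 / pd u 0 p) ^ 2 * ∑ a : Fin n, pd (L a) 0 p * pd u a.succ p := by
    rw [Finset.mul_sum, Finset.mul_sum, ← Finset.sum_add_distrib]
    refine Finset.sum_congr rfl fun a _ => ?_
    have hneg : ∑ b : Fin n, (-L b p) * pd (L a) b.succ p
        = -∑ b : Fin n, L b p * pd (L a) b.succ p := by
      simp [neg_mul]
    rw [hneg]
    ring
  exact hG2.trans halg.symm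
end

section
/- Transport equation for the spatial eikonal one-form: assume in addition that u is C² and L¹, …, Lⁿ are C¹ on Ω. Then for each j ∈ {1, …, n}, the function ξ_j = μ ∂_j u is C¹ and satisfies L ξ_j = −Σ_{a=1}^n (∂_j L^a) ξ_a + Σ_{a=1}^n (∂_t L^a) ξ_a · ξ_j on Ω. (The Cartesian-coordinate form of equation (3.18), displayed in the proof of the lemma 'Transport equations for μ, ξ_j, and ξ_j^{(Small)}'.) -/
lemma pd_hasFDerivAt {m : ℕ} {u : (Fin m → ℝ) → ℝ} {p : Fin m → ℝ}
    (hu : ContDiffAt ℝ 2 u p) (α : Fin m) :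
    HasFDerivAt (pd u α)
      ((ContinuousLinearMap.apply ℝ ℝ (Pi.single α 1)).comp (fderiv ℝ (fderiv ℝ u) p)) p := by
  have h1 : ContDiffAt ℝ 1 (fderiv ℝ u) p := hu.fderiv_right (by norm_num)
  have h2 : HasFDerivAt (fderiv ℝ u) (fderiv ℝ (fderiv ℝ u) p) p :=
    (h1.differentiableAt one_ne_zero).hasFDerivAt
  exact (ContinuousLinearMap.apply ℝ ℝ (Pi.single α 1)).hasFDerivAt.comp p h2

/-- Transport equation for the spatial eikonal one-form.  If `u` is `C²`
and the `L^a` are `C¹` on `Ω`, then for each `j ∈ {1,…,n}` the function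
`ξ_j = μ ∂_j u` (with `μ = 1/∂_t u`) is `C¹` and satisfies
`L ξ_j = −Σ_a (∂_j L^a) ξ_a + (Σ_a (∂_t L^a) ξ_a) · ξ_j` on `Ω`,
where `L f = ∂_t f + Σ_b L^b ∂_b f`. -/
theorem xi_transport_equation {n : ℕ} (hn : 1 ≤ n)
    (Ω : Set (Fin (n + 1) → ℝ)) (hΩ : IsOpen Ω)
    (L : Fin n → (Fin (n + 1) → ℝ) → ℝ)
    (u : (Fin (n + 1) → ℝ) → ℝ)
    (hu : ContDiffOn ℝ 2 u Ω)
    (hL : ∀ a : Fin n, ContDiffOn ℝ 1 (L a) Ω)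
    (heik : ∀ p ∈ Ω, pd u 0 p + ∑ a : Fin n, L a p * pd u a.succ p = 0)
    (hpos : ∀ p ∈ Ω, 0 < pd u 0 p) :
    ∀ j : Fin n,
      ContDiffOn ℝ 1 (fun p => (1 / pd u 0 p) * pd u j.succ p) Ω ∧
      ∀ p ∈ Ω,
        pd (fun q => (1 / pd u 0 q) * pd u j.succ q) 0 p
            + ∑ b : Fin n, L b p * pd (fun q => (1 / pd u 0 q) * pd u j.succ q) b.succ p
          = -(∑ a : Fin n, pd (L a) j.succ p * ((1 / pd u 0 p) * pd u a.succ p))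
            + (∑ a : Fin n, pd (L a) 0 p * ((1 / pd u 0 p) * pd u a.succ p))
              * ((1 / pd u 0 p) * pd u j.succ p) := by
  have hne : ∀ p ∈ Ω, pd u 0 p ≠ 0 := fun p hp => ne_of_gt (hpos p hp)
  have hpd : ∀ α : Fin (n+1), ContDiffOn ℝ 1 (pd u α) Ω := by
    intro α
    have h1 : ContDiffOn ℝ 1 (fun q => fderiv ℝ u q) Ω := hu.fderiv_of_isOpen hΩ (by norm_num)
    exact (ContinuousLinearMap.apply ℝ ℝ (Pi.single α 1)).contDiff.comp_contDiffOn h1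
  intro j
  constructor
  · exact (contDiffOn_const.div (hpd 0) hne).mul (hpd j.succ)
  · intro p hp
    simp only [one_div]
    set e : Fin (n+1) → (Fin (n+1) → ℝ) := fun α => Pi.single α 1 with he
    have hu2 : ContDiffAt ℝ 2 u p := hu.contDiffAt (hΩ.mem_nhds hp)
    set Φ := fderiv ℝ (fderiv ℝ u) p with hΦ
    have hΦα : ∀ α, HasFDerivAt (pd u α) ((ContinuousLinearMap.apply ℝ ℝ (e α)).comp Φ) p :=
      fun α => pd_hasFDerivAt hu2 α
    have hsymm : ∀ v w, Φ v w = Φ w v := hu2.isSymmSndFDerivAt (by norm_num)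
    have hLd : ∀ a, HasFDerivAt (L a) (fderiv ℝ (L a) p) p := fun a =>
      (((hL a).contDiffAt (hΩ.mem_nhds hp)).differentiableAt one_ne_zero).hasFDerivAt
    -- derivative of the eikonal identity
    have hF : HasFDerivAt (fun q => pd u 0 q + ∑ a : Fin n, L a q * pd u a.succ q)
        (((ContinuousLinearMap.apply ℝ ℝ (e 0)).comp Φ)
          + ∑ a : Fin n, (L a p • ((ContinuousLinearMap.apply ℝ ℝ (e a.succ)).comp Φ)
              + pd u a.succ p • fderiv ℝ (L a) p)) p :=
      (hΦα 0).add (HasFDerivAt.fun_sum fun a _ => (hLd a).mul (hΦα a.succ))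
    have heq : (fun q => pd u 0 q + ∑ a : Fin n, L a q * pd u a.succ q) =ᶠ[nhds p]
        (fun _ => (0:ℝ)) :=
      Filter.eventuallyEq_of_mem (hΩ.mem_nhds hp) fun q hq => heik q hq
    have hF0 : HasFDerivAt (fun q => pd u 0 q + ∑ a : Fin n, L a q * pd u a.succ q)
        (0 : (Fin (n+1) → ℝ) →L[ℝ] ℝ) p :=
      (hasFDerivAt_const (0:ℝ) p).congr_of_eventuallyEq heq
    have key : ∀ w, Φ w (e 0)
        + ∑ a : Fin n, (L a p * Φ w (e a.succ) + pd u a.succ p * fderiv ℝ (L a) p w) = 0 := by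
      intro w
      have h := hF.unique hF0
      have h2 := congrArg (fun T : (Fin (n+1) → ℝ) →L[ℝ] ℝ => T w) h
      simpa [ContinuousLinearMap.sum_apply, ContinuousLinearMap.add_apply,
        ContinuousLinearMap.smul_apply, ContinuousLinearMap.comp_apply,
        ContinuousLinearMap.apply_apply, smul_eq_mul] using h2
    have hpdL : ∀ (a : Fin n) (β : Fin (n+1)), fderiv ℝ (L a) p (e β) = pd (L a) β p :=
      fun a β => rfl
    have hsplit : ∀ w, Φ w (e 0) + ((∑ a : Fin n, L a p * Φ w (e a.succ))
        + (∑ a : Fin n, pd u a.succ p * fderiv ℝ (L a) p w)) = 0 := by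
      intro w; have h := key w; rwa [Finset.sum_add_distrib] at h
    have Kj : Φ (e j.succ) (e 0) + ((∑ a : Fin n, L a p * Φ (e j.succ) (e a.succ))
        + (∑ a : Fin n, pd u a.succ p * pd (L a) j.succ p)) = 0 := by
      have h := hsplit (e j.succ); simp only [hpdL] at h; exact h
    have K0 : Φ (e 0) (e 0) + ((∑ a : Fin n, L a p * Φ (e 0) (e a.succ))
        + (∑ a : Fin n, pd u a.succ p * pd (L a) 0 p)) = 0 := by
      have h := hsplit (e 0); simp only [hpdL] at h; exact h
    -- derivative of ξ
    have hinv : HasFDerivAt (fun q => (pd u 0 q)⁻¹)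
        ((ContinuousLinearMap.smulRight (1 : ℝ →L[ℝ] ℝ) (-(pd u 0 p ^ 2)⁻¹)).comp
          ((ContinuousLinearMap.apply ℝ ℝ (e 0)).comp Φ)) p :=
      (hasFDerivAt_inv (hne p hp)).comp p (hΦα 0)
    have hξ := hinv.fun_mul (hΦα j.succ)
    have hpdξ : ∀ β, pd (fun q => (pd u 0 q)⁻¹ * pd u j.succ q) β p
        = (pd u 0 p)⁻¹ * Φ (e β) (e j.succ)
          + pd u j.succ p * (Φ (e β) (e 0) * (-(pd u 0 p ^ 2)⁻¹)) := by
      intro β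
      show fderiv ℝ (fun q => (pd u 0 q)⁻¹ * pd u j.succ q) p (e β) = _
      rw [hξ.fderiv]
      simp only [ContinuousLinearMap.add_apply, ContinuousLinearMap.smul_apply,
        ContinuousLinearMap.comp_apply, ContinuousLinearMap.apply_apply,
        ContinuousLinearMap.smulRight_apply, ContinuousLinearMap.one_apply, smul_eq_mul]
    have hsum2 : ∑ b : Fin n, L b p * pd (fun q => (pd u 0 q)⁻¹ * pd u j.succ q) b.succ p
        = (pd u 0 p)⁻¹ * (∑ b : Fin n, L b p * Φ (e j.succ) (e b.succ))
          + (pd u j.succ p * (-(pd u 0 p ^ 2)⁻¹))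
            * (∑ b : Fin n, L b p * Φ (e 0) (e b.succ)) := by
      rw [Finset.mul_sum, Finset.mul_sum, ← Finset.sum_add_distrib]
      refine Finset.sum_congr rfl fun b _ => ?_
      rw [hpdξ b.succ, hsymm (e b.succ) (e j.succ), hsymm (e b.succ) (e 0)]
      ring
    have hR1 : ∑ a : Fin n, pd (L a) j.succ p * ((pd u 0 p)⁻¹ * pd u a.succ p)
        = (pd u 0 p)⁻¹ * ∑ a : Fin n, pd u a.succ p * pd (L a) j.succ p := by
      rw [Finset.mul_sum]; exact Finset.sum_congr rfl fun a _ => by ring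
    have hR0 : ∑ a : Fin n, pd (L a) 0 p * ((pd u 0 p)⁻¹ * pd u a.succ p)
        = (pd u 0 p)⁻¹ * ∑ a : Fin n, pd u a.succ p * pd (L a) 0 p := by
      rw [Finset.mul_sum]; exact Finset.sum_congr rfl fun a _ => by ring
    rw [hpdξ 0, hsum2, hR1, hR0, hsymm (e 0) (e j.succ)]
    linear_combination (pd u 0 p)⁻¹ * Kj + (pd u j.succ p * (-(pd u 0 p ^ 2)⁻¹)) * K0
end
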